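/- Every finitely generated torsion-free module over a Prüfer domain (e.g., a valuation ring or a Dedekind domain) is projective. -/

import Mathlib

open Function Submodule Set

section Aux

variable {A : Type*} [CommRing A] [IsDomain A]

/-- An invertible ideal is projective. -/
theorem aux_invertible_ideal_projective (I : Ideal A)
    (J : FractionalIdeal (nonZeroDivisors A) (FractionRing A))
    (hIJ : (I : FractionalIdeal (nonZeroDivisors A) (FractionRing A)) * J = 1) :
    Module.Projective A I := by
  classical
  set K := FractionRing A
  set I' : Submodule A K := ((I : FractionalIdeal (nonZeroDivisors A) K) : Submodule A K)
  set J' : Submodule A K := (J : Submodule A K)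
  have h1 : (1 : K) ∈ I' * J' := by
    have : I' * J' = ((1 : FractionalIdeal (nonZeroDivisors A) K) : Submodule A K) := by
      rw [← FractionalIdeal.coe_mul, hIJ]
    rw [this, FractionalIdeal.coe_one]
    exact Submodule.one_le.mp le_rfl
  -- extract a finite sum representation of 1
  have hrep : ∃ l : List (I × J'),
      (l.map fun p => algebraMap A K (p.1 : A) * (p.2 : K)).sum = 1 := by
    have : ∀ x ∈ I' * J', ∃ l : List (I × J'),
        (l.map fun p => algebraMap A K (p.1 : A) * (p.2 : K)).sum = x := by
      intro x hx
      refine Submodule.mul_induction_on hx ?_ ?_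
      · intro m hm n hn
        obtain ⟨a, haI, rfl⟩ := (FractionalIdeal.mem_coeIdeal _).mp hm
        exact ⟨[(⟨a, haI⟩, ⟨n, hn⟩)], by simp⟩
      · rintro x y ⟨lx, hlx⟩ ⟨ly, hly⟩
        exact ⟨lx ++ ly, by simp [hlx, hly]⟩
    exact this 1 h1
  obtain ⟨l, hl⟩ := hrep
  set n := l.length
  set a : Fin n → I := fun i => (l.get i).1
  set b : Fin n → J' := fun i => (l.get i).2
  have hsum : ∑ i : Fin n, algebraMap A K ((a i : A)) * ((b i : J') : K) = 1 := by
    have := Fin.sum_univ_fun_getElem l fun p : I × J' => algebraMap A K (p.1 : A) * (p.2 : K)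
    simpa [a, b, hl] using this
  -- for x ∈ I, b i * algebraMap x lands in A
  have hmem : ∀ (x : I) (i : Fin n), ∃ c : A,
      algebraMap A K c = algebraMap A K (x : A) * ((b i : J') : K) := by
    intro x i
    have hx : algebraMap A K (x : A) ∈ I' :=
      (FractionalIdeal.mem_coeIdeal _).mpr ⟨(x : A), x.2, rfl⟩
    have : algebraMap A K (x : A) * ((b i : J') : K) ∈ I' * J' :=
      Submodule.mul_mem_mul hx (b i).2
    have h1' : I' * J' = ((1 : FractionalIdeal (nonZeroDivisors A) K) : Submodule A K) := by
      rw [← FractionalIdeal.coe_mul, hIJ]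
    rw [h1', FractionalIdeal.coe_one, Submodule.mem_one] at this
    obtain ⟨c, hc⟩ := this
    exact ⟨c, hc⟩
  choose c hc using hmem
  have hinj : Injective (algebraMap A K) := IsFractionRing.injective A K
  -- the dual functionals
  let φ : Fin n → (I →ₗ[A] A) := fun i =>
    { toFun := fun x => c x i
      map_add' := by
        intro x y
        apply hinj
        simp only [map_add, hc, Submodule.coe_add]
        ring
      map_smul' := by
        intro r x
        apply hinj
        simp only [hc, RingHom.id_apply, map_mul, Algebra.smul_def, SetLike.val_smul,
          smul_eq_mul]
        ring }
  let σ : I →ₗ[A] (Fin n → A) := LinearMap.pi φ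
  let π : (Fin n → A) →ₗ[A] I :=
    ∑ i : Fin n, (LinearMap.proj i : (Fin n → A) →ₗ[A] A).smulRight (a i)
  have hsplit : π.comp σ = LinearMap.id := by
    ext x
    have : ((π (σ x) : I) : A) = (x : A) := by
      apply hinj
      have : ((π (σ x) : I) : A) = ∑ i : Fin n, c x i * (a i : A) := by
        simp [π, σ, φ, Submodule.coe_sum]
      rw [this, map_sum]
      calc ∑ i : Fin n, algebraMap A K (c x i * (a i : A))
          = ∑ i : Fin n, algebraMap A K (x : A) *
              (algebraMap A K ((a i : A)) * ((b i : J') : K)) := by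
            refine Finset.sum_congr rfl fun i _ => ?_
            rw [map_mul, hc]
            ring
        _ = algebraMap A K (x : A) *
              ∑ i : Fin n, algebraMap A K ((a i : A)) * ((b i : J') : K) := by
            rw [Finset.mul_sum]
        _ = algebraMap A K (x : A) := by rw [hsum, mul_one]
    exact_mod_cast this
  exact Module.Projective.of_split σ π hsplit

/-- Over a Prüfer domain, a f.g. module embedding into a finite free module
is projective. -/
theorem aux_fg_sub_free_projective
    (hPrufer : ∀ I : Ideal A, I ≠ ⊥ → I.FG →
      ∃ J : FractionalIdeal (nonZeroDivisors A) (FractionRing A),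
        (I : FractionalIdeal (nonZeroDivisors A) (FractionRing A)) * J = 1) :
    ∀ (n : ℕ) (M : Type*) [AddCommGroup M] [Module A M] [Module.Finite A M]
      (f : M →ₗ[A] (Fin n → A)), Injective f → Module.Projective A M := by
  intro n
  induction n with
  | zero =>
    intro M _ _ _ f hf
    have : Subsingleton M := hf.subsingleton
    infer_instance
  | succ n ih =>
    intro M _ _ _ f hf
    set g : M →ₗ[A] A := (LinearMap.proj (Fin.last n)).comp f with hg
    set I : Ideal A := LinearMap.range g with hIdef
    by_cases hI : I = ⊥
    · -- last coordinate always vanishes, drop it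
      have hglast : ∀ m : M, g m = 0 := by
        intro m
        have : g m ∈ I := LinearMap.mem_range_self g m
        rw [hI] at this
        simpa using this
      refine ih M ((LinearMap.funLeft A A Fin.castSucc).comp f) ?_
      intro x y hxy
      apply hf
      funext i
      refine Fin.lastCases ?_ ?_ i
      · have hx := hglast x
        have hy := hglast y
        simp only [hg, LinearMap.comp_apply, LinearMap.proj_apply] at hx hy
        rw [hx, hy]
      · intro j
        exact congrFun hxy j
    · -- invertible ideal case
      have hFG : I.FG := by
        have : Module.Finite A (LinearMap.range g) := Module.Finite.range g
        exact Module.Finite.iff_fg.mp this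
      obtain ⟨J, hJ⟩ := hPrufer I hI hFG
      have hproj : Module.Projective A I := aux_invertible_ideal_projective I J hJ
      set g' : M →ₗ[A] I := g.rangeRestrict with hg'
      have hg'surj : Surjective g' := LinearMap.surjective_rangeRestrict g
      obtain ⟨s, hs⟩ := Module.projective_lifting_property g' (LinearMap.id) hg'surj
      set Kk : Submodule A M := LinearMap.ker g' with hKk
      have hmem : ∀ m : M, m - s (g' m) ∈ Kk := by
        intro m
        simp only [hKk, LinearMap.mem_ker, map_sub]
        have : g' (s (g' m)) = g' m := by
          have := congrFun (congrArg (fun h => h.toFun) hs) (g' m)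
          simpa using this
        rw [this, sub_self]
      set r : M →ₗ[A] Kk := (LinearMap.id - s.comp g').codRestrict Kk hmem with hr
      have hrk : ∀ k : Kk, r (k : M) = k := by
        intro k
        apply Subtype.ext
        have hk : g' (k : M) = 0 := k.2
        simp [hr, hk]
      have hKfin : Module.Finite A Kk := Module.Finite.of_surjective r fun k => ⟨k, hrk k⟩
      have hKproj : Module.Projective A Kk := by
        refine ih Kk ((LinearMap.funLeft A A Fin.castSucc).comp (f.comp Kk.subtype)) ?_
        intro x y hxy
        apply Subtype.ext
        apply hf
        funext i
        refine Fin.lastCases ?_ ?_ i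
        · -- last coordinate is g, which vanishes on the kernel
          have hx : g (x : M) = 0 := by
            have : g' (x : M) = 0 := x.2
            have h2 := congrArg Subtype.val this
            exact h2
          have hy : g (y : M) = 0 := by
            have : g' (y : M) = 0 := y.2
            have h2 := congrArg Subtype.val this
            exact h2
          simp only [hg, LinearMap.comp_apply, LinearMap.proj_apply] at hx hy
          rw [hx, hy]
        · intro j
          exact congrFun hxy j
      -- split M as Kk × I
      refine Module.Projective.of_split (M := Kk × I)
        (LinearMap.prod r g') (LinearMap.coprod Kk.subtype s) ?_
      ext m
      simp [r]

end Aux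

/-- Every finitely generated torsion-free module over a Prüfer domain
(an integral domain in which every nonzero finitely generated ideal is
invertible as a fractional ideal) is projective. -/
theorem stmt3 (A : Type*) [CommRing A] [IsDomain A]
    (hPrufer : ∀ I : Ideal A, I ≠ ⊥ → I.FG →
      ∃ J : FractionalIdeal (nonZeroDivisors A) (FractionRing A),
        (I : FractionalIdeal (nonZeroDivisors A) (FractionRing A)) * J = 1)
    (M : Type*) [AddCommGroup M] [Module A M] [Module.Finite A M]
    [NoZeroSMulDivisors A M] :
    Module.Projective A M := by
  classical
  obtain ⟨k, s, hs⟩ := Module.Finite.exists_fin (R := A) (M := M)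
  obtain ⟨I, indepI, hI⟩ := exists_maximal_linearIndepOn A s
  haveI : Fintype I := Fintype.ofFinite I
  set N : Submodule A M := span A (Set.range fun i : I => s (i : Fin k)) with hN
  let sI_basis : Module.Basis I A N := Module.Basis.span indepI.linearIndependent
  have exists_a : ∀ i : Fin k, ∃ a : A, a ≠ 0 ∧ a • s i ∈ N := by
    intro i
    by_cases hi : i ∈ I
    · refine ⟨1, one_ne_zero, ?_⟩
      rw [one_smul]
      exact subset_span ⟨⟨i, hi⟩, rfl⟩
    · obtain ⟨a, ha, ha'⟩ := hI i hi
      refine ⟨a, ha, ?_⟩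
      have : s '' I = Set.range fun i : I => s (i : Fin k) := by
        rw [Set.image_eq_range]
      rwa [this] at ha'
  choose a ha ha' using exists_a
  set A₀ : A := ∏ i, a i with hA₀
  have hA : A₀ ≠ 0 := by
    rw [hA₀, Finset.prod_ne_zero_iff]
    intro i _
    exact ha i
  set φ : M →ₗ[A] M := LinearMap.lsmul A M A₀ with hφ
  have hker : LinearMap.ker φ = ⊥ := LinearMap.ker_lsmul hA
  have hφinj : Injective φ := LinearMap.ker_eq_bot.mp hker
  have hrange : ∀ m : M, φ m ∈ N := by
    have hle : LinearMap.range φ ≤ N := by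
      suffices h : ∀ i, φ (s i) ∈ N by
        rw [LinearMap.range_eq_map, ← hs, map_span_le]
        rintro _ ⟨i, rfl⟩
        exact h i
      intro i
      have : φ (s i) = (∏ j ∈ {i}ᶜ, a j) • (a i • s i) := by
        rw [hφ, LinearMap.lsmul_apply, ← mul_smul, hA₀,
          Fintype.prod_eq_prod_compl_mul i, mul_comm]
      rw [this]
      exact N.smul_mem _ (ha' i)
    intro m
    exact hle (LinearMap.mem_range_self φ m)
  -- embed M into Fin (card I) → A
  set e1 : M →ₗ[A] N := φ.codRestrict N hrange with he1
  have he1inj : Injective e1 := by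
    intro x y hxy
    apply hφinj
    exact congrArg (fun z : N => (z : M)) hxy
  let e2 : N ≃ₗ[A] (I → A) := sI_basis.equivFun
  let e3 : (I → A) ≃ₗ[A] (Fin (Fintype.card I) → A) :=
    LinearEquiv.funCongrLeft A A (Fintype.equivFin I).symm
  refine aux_fg_sub_free_projective hPrufer (Fintype.card I) M
    ((e3.toLinearMap.comp e2.toLinearMap).comp e1) ?_
  exact e3.injective.comp (e2.injective.comp he1inj)
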